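/- arXiv:1406.2124 — 4 statements merged into one kernel-verified Lean document; each statement's English description precedes it below -/
import Mathlib

section
/- For every r ∈ ℕ with r ≥ 1, every n ∈ ℕ, and every x ∈ ℚ, the Daehee polynomial of order r satisfies D_n^{(r)}(x) = Σ_{m=0}^{n} S_1(n,m) · B_m^{(r)}(x), where S_1(n,m) are the signed Stirling numbers of the first kind and B_m^{(r)}(x) are the Bernoulli polynomials of order r. -/
/-- `log(1+t) = ∑_{n ≥ 1} (-1)^{n+1} t^n / n` as a formal power series over `ℚ`. -/
noncomputable def logOneAdd : PowerSeries ℚ :=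
  PowerSeries.mk fun n => if n = 0 then 0 else (-1 : ℚ) ^ (n + 1) / n

/-- `e^{xt} = ∑_{n ≥ 0} x^n t^n / n!` as a formal power series over `ℚ`. -/
noncomputable def expMul (x : ℚ) : PowerSeries ℚ :=
  PowerSeries.mk fun n => x ^ n / (n.factorial : ℚ)

/-- Formal composition `f(g(t))` of power series, intended for `g` with zero
constant term (then `coeff n (g^m) = 0` for `m > n`, so the sum below is the
full composition). -/
noncomputable def psComp (f g : PowerSeries ℚ) : PowerSeries ℚ :=
  PowerSeries.mk fun n =>
    ∑ m ∈ Finset.range (n + 1),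
      PowerSeries.coeff m f * PowerSeries.coeff n (g ^ m)

/-- `(1+t)^x := exp (x · log(1+t))` as a formal power series over `ℚ`. -/
noncomputable def onePlusPow (x : ℚ) : PowerSeries ℚ :=
  psComp (PowerSeries.exp ℚ) (x • logOneAdd)

/-- The falling factorial `(x)_n = x (x-1) ⋯ (x-n+1)`. -/
def fallFact (x : ℚ) (n : ℕ) : ℚ := ∏ i ∈ Finset.range n, (x - (i : ℚ))

open PowerSeries Finset

lemma constantCoeff_L : constantCoeff logOneAdd = 0 := by
  simp [logOneAdd, ← coeff_zero_eq_constantCoeff_apply]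

lemma coeff_L_pow_eq_zero {n m : ℕ} (h : n < m) : coeff n (logOneAdd ^ m) = 0 := by
  have : (X : PowerSeries ℚ) ^ m ∣ logOneAdd ^ m :=
    pow_dvd_pow_of_dvd (X_dvd_iff.mpr constantCoeff_L) m
  exact X_pow_dvd_iff.mp this n h

lemma coeff_psComp (f : PowerSeries ℚ) {n N : ℕ} (h : n < N) :
    coeff n (psComp f logOneAdd) =
      ∑ m ∈ range N, coeff m f * coeff n (logOneAdd ^ m) := by
  rw [psComp, coeff_mk]
  apply sum_subset
  · exact range_subset_range.mpr h
  · intro m _ hm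
    rw [coeff_L_pow_eq_zero (by simpa using hm), mul_zero]
section
variable (n : ℕ) (F : ℕ × ℕ → ℚ)

lemma sum_antidiag_range (hF : ∀ p : ℕ × ℕ, n < p.1 + p.2 → F p = 0) :
    ∑ m ∈ range (n+1), ∑ p ∈ Finset.HasAntidiagonal.antidiagonal m, F p
      = ∑ p ∈ range (n+1) ×ˢ range (n+1), F p := by
  rw [← sum_biUnion]
  · apply sum_subset
    · intro p hp
      simp only [mem_biUnion, mem_range, Finset.HasAntidiagonal.mem_antidiagonal] at hp
      obtain ⟨m, hm, hpm⟩ := hp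
      simp only [mem_product, mem_range]
      omega
    · intro p hp hp'
      apply hF
      by_contra h
      push_neg at h
      exact hp' (mem_biUnion.mpr ⟨p.1 + p.2, mem_range.mpr (by omega),
        Finset.HasAntidiagonal.mem_antidiagonal.mpr rfl⟩)
  · intro a _ b _ hab
    simp only [Function.onFun, disjoint_left]
    intro p hpa hpb
    rw [Finset.HasAntidiagonal.mem_antidiagonal] at hpa hpb
    omega
end

lemma psComp_one : psComp 1 logOneAdd = 1 := by
  ext n
  rw [psComp, coeff_mk]
  rw [Finset.sum_eq_single 0]
  · simp
  · intro m _ hm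
    simp [coeff_one, hm]
  · simp

lemma psComp_X : psComp X logOneAdd = logOneAdd := by
  ext n
  rw [psComp, coeff_mk]
  rcases Nat.eq_zero_or_pos n with h | h
  · subst h
    simp only [zero_add, Finset.sum_range_one, pow_zero, coeff_zero_X, zero_mul]
    rw [coeff_zero_eq_constantCoeff_apply, constantCoeff_L]
  · rw [Finset.sum_eq_single 1]
    · simp
    · intro m _ hm
      simp [coeff_X, hm]
    · intro h'
      simp at h'
      omega

lemma psComp_add (f₁ f₂ : PowerSeries ℚ) :
    psComp (f₁ + f₂) logOneAdd = psComp f₁ logOneAdd + psComp f₂ logOneAdd := by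
  ext n
  simp [psComp, add_mul, Finset.sum_add_distrib]

lemma psComp_mul (f₁ f₂ : PowerSeries ℚ) :
    psComp (f₁ * f₂) logOneAdd = psComp f₁ logOneAdd * psComp f₂ logOneAdd := by
  ext n
  rw [PowerSeries.coeff_mul, psComp, coeff_mk]
  -- LHS
  have lhs : ∑ m ∈ range (n+1), coeff m (f₁ * f₂) * coeff n (logOneAdd ^ m)
      = ∑ p ∈ range (n+1) ×ˢ range (n+1),
          coeff p.1 f₁ * coeff p.2 f₂ * coeff n (logOneAdd ^ (p.1 + p.2)) := by
    rw [← sum_antidiag_range n _ (fun p hp => by rw [coeff_L_pow_eq_zero hp, mul_zero])]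
    refine Finset.sum_congr rfl fun m hm => ?_
    rw [PowerSeries.coeff_mul, Finset.sum_mul]
    refine Finset.sum_congr rfl fun p hp => ?_
    rw [Finset.HasAntidiagonal.mem_antidiagonal] at hp
    rw [hp]
  rw [lhs]
  -- RHS
  have rhs : ∑ q ∈ Finset.HasAntidiagonal.antidiagonal n,
      coeff q.1 (psComp f₁ logOneAdd) * coeff q.2 (psComp f₂ logOneAdd)
      = ∑ q ∈ Finset.HasAntidiagonal.antidiagonal n, ∑ i ∈ range (n+1), ∑ j ∈ range (n+1),
          (coeff i f₁ * coeff j f₂) *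
            (coeff q.1 (logOneAdd ^ i) * coeff q.2 (logOneAdd ^ j)) := by
    refine Finset.sum_congr rfl fun q hq => ?_
    rw [Finset.HasAntidiagonal.mem_antidiagonal] at hq
    rw [coeff_psComp f₁ (show q.1 < n + 1 by omega),
        coeff_psComp f₂ (show q.2 < n + 1 by omega), Finset.sum_mul_sum]
    refine Finset.sum_congr rfl fun i _ => Finset.sum_congr rfl fun j _ => by ring
  rw [rhs, Finset.sum_comm]
  rw [Finset.sum_product]
  refine Finset.sum_congr rfl fun i _ => ?_
  rw [Finset.sum_comm]
  refine Finset.sum_congr rfl fun j _ => ?_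
  rw [← Finset.mul_sum, pow_add, PowerSeries.coeff_mul]

lemma dL_eq : d⁄dX ℚ logOneAdd = PowerSeries.mk fun n => (-1 : ℚ) ^ n := by
  ext n
  rw [coeff_derivative, coeff_mk, logOneAdd, coeff_mk]
  have h1 : (n + 1 : ℚ) ≠ 0 := by positivity
  simp only [Nat.succ_ne_zero, if_false]
  rw [pow_add, pow_add]
  push_cast
  field_simp

lemma onePlusX_mul_dL : (1 + X) * d⁄dX ℚ logOneAdd = 1 := by
  rw [dL_eq]
  ext n
  rw [add_mul, one_mul, map_add]
  cases n with
  | zero => simp [coeff_zero_X_mul]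
  | succ k =>
    rw [coeff_succ_X_mul, coeff_mk, coeff_mk, coeff_one]
    simp [pow_succ]

lemma L_pow_deriv (m : ℕ) :
    (1 + X) * d⁄dX ℚ (logOneAdd ^ (m+1)) = ((m : ℚ) + 1) • logOneAdd ^ m := by
  rw [Derivation.leibniz_pow]
  simp only [Nat.add_sub_cancel, smul_eq_mul]
  rw [mul_smul_comm,
    show (1 + X) * (logOneAdd ^ m * d⁄dX ℚ logOneAdd)
        = logOneAdd ^ m * ((1 + X) * d⁄dX ℚ logOneAdd) from by ring,
    onePlusX_mul_dL, mul_one, ← Nat.cast_smul_eq_nsmul ℚ]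
  push_cast
  rfl

lemma coeff_rec (n m : ℕ) :
    (n + 1 : ℚ) * coeff (n+1) (logOneAdd ^ (m+1))
      + (n : ℚ) * coeff n (logOneAdd ^ (m+1))
      = ((m : ℚ) + 1) * coeff n (logOneAdd ^ m) := by
  have h := congrArg (coeff n) (L_pow_deriv m)
  rw [add_mul, one_mul, map_add, map_smul, smul_eq_mul] at h
  rw [coeff_derivative] at h
  cases n with
  | zero =>
    rw [coeff_zero_X_mul] at h
    push_cast
    simpa [mul_comm] using h
  | succ k =>
    rw [coeff_succ_X_mul, coeff_derivative] at h
    push_cast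
    push_cast at h
    linarith [h]

noncomputable def fE (n : ℕ) : ℚ := PowerSeries.coeff n (psComp (PowerSeries.exp ℚ) logOneAdd)

lemma psComp_exp : psComp (PowerSeries.exp ℚ) logOneAdd = 1 + X := by
  have hfn : ∀ n : ℕ, fE n = ∑ m ∈ range (n+1),
      (1 / (m.factorial : ℚ)) * coeff n (logOneAdd ^ m) := by
    intro n
    rw [fE, coeff_psComp _ (Nat.lt_succ_self n)]
    refine Finset.sum_congr rfl fun m _ => ?_
    rw [PowerSeries.coeff_exp]
    norm_num
  have h0 : fE 0 = 1 := by
    rw [hfn]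
    simp
  have hstep : ∀ n : ℕ, ((n : ℚ) + 1) * fE (n+1)
      = (1 - (n : ℚ)) * fE n + (n : ℚ) * coeff n (1 : PowerSeries ℚ) := by
    intro n
    rw [hfn (n+1), Finset.mul_sum, Finset.sum_range_succ']
    have hz : coeff (n+1) (logOneAdd ^ 0) = 0 := by
      rw [pow_zero, coeff_one]; simp
    rw [hz]
    simp only [mul_zero, add_zero]
    have step1 : ∀ k, (n + 1 : ℚ) * (1 / ((k+1).factorial : ℚ) * coeff (n+1) (logOneAdd ^ (k+1)))
        = 1 / (k.factorial : ℚ) * coeff n (logOneAdd ^ k)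
          - (n : ℚ) * (1 / ((k+1).factorial : ℚ) * coeff n (logOneAdd ^ (k+1))) := by
      intro k
      have hr := coeff_rec n k
      set A := coeff (n+1) (logOneAdd ^ (k+1)) with hA
      set B := coeff n (logOneAdd ^ (k+1)) with hB
      set C := coeff n (logOneAdd ^ k) with hC
      have hfac : ((k+1).factorial : ℚ) = ((k : ℚ)+1) * (k.factorial : ℚ) := by
        rw [Nat.factorial_succ]; push_cast; ring
      have hfk : (k.factorial : ℚ) ≠ 0 := Nat.cast_ne_zero.mpr k.factorial_ne_zero
      have hfk1 : ((k+1).factorial : ℚ) ≠ 0 := Nat.cast_ne_zero.mpr (k+1).factorial_ne_zero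
      have key : ((n : ℚ)+1) * A = ((k : ℚ)+1)*C - n*B := by linarith
      calc ((n : ℚ)+1) * (1/((k+1).factorial : ℚ) * A)
          = (((n : ℚ)+1)*A) / ((k+1).factorial : ℚ) := by ring
        _ = (((k : ℚ)+1)*C - n*B) / ((k+1).factorial : ℚ) := by rw [key]
        _ = 1/(k.factorial : ℚ) * C - (n : ℚ) * (1/((k+1).factorial : ℚ) * B) := by
            rw [hfac]; field_simp
    rw [Finset.sum_congr rfl fun k _ => step1 k, Finset.sum_sub_distrib]
    have e1 : ∑ k ∈ range (n+1), 1 / (k.factorial : ℚ) * coeff n (logOneAdd ^ k) = fE n :=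
      (hfn n).symm
    have e2 : ∑ k ∈ range (n+1),
        (n : ℚ) * (1 / ((k+1).factorial : ℚ) * coeff n (logOneAdd ^ (k+1)))
        = (n : ℚ) * (fE n - coeff n (1 : PowerSeries ℚ)) := by
      rw [← Finset.mul_sum]
      congr 1
      have : ∑ k ∈ range (n+1), 1 / ((k+1).factorial : ℚ) * coeff n (logOneAdd ^ (k+1))
          = ∑ m ∈ range (n+2), 1 / ((m).factorial : ℚ) * coeff n (logOneAdd ^ m)
            - 1 / ((0).factorial : ℚ) * coeff n (logOneAdd ^ 0) := by
        have h' := Finset.sum_range_succ'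
          (fun m => 1/((m).factorial : ℚ) * coeff n (logOneAdd ^ m)) (n+1)
        linarith [h']
      rw [this, Finset.sum_range_succ, coeff_L_pow_eq_zero (Nat.lt_succ_self n), mul_zero,
        add_zero, ← hfn n]
      simp [coeff_one]
    rw [e1, e2]
    ring
  have hge : ∀ n : ℕ, 2 ≤ n → fE n = 0 := by
    intro n hn
    induction n, hn using Nat.le_induction with
    | base =>
      have h := hstep 1
      rw [coeff_one] at h
      norm_num at h
      exact h
    | succ k hk ih =>
      have h := hstep k
      rw [coeff_one, if_neg (by omega : ¬ k = 0), ih, mul_zero, mul_zero, add_zero] at h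
      have hne : ((k : ℚ) + 1) ≠ 0 := by positivity
      exact (mul_eq_zero.mp h).resolve_left hne
  have h1 : fE 1 = 1 := by
    have h := hstep 0
    rw [coeff_one, if_pos rfl] at h
    push_cast at h
    rw [h0] at h
    linarith
  ext n
  have : coeff n (psComp (PowerSeries.exp ℚ) logOneAdd) = fE n := rfl
  rw [this, map_add, coeff_one, coeff_X]
  match n with
  | 0 => rw [h0]; norm_num
  | 1 => rw [h1]; norm_num
  | (k+2) => rw [hge (k+2) (by omega)]; simp

lemma psComp_sub (f₁ f₂ : PowerSeries ℚ) :
    psComp (f₁ - f₂) logOneAdd = psComp f₁ logOneAdd - psComp f₂ logOneAdd := by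
  ext n
  simp [psComp, sub_mul, Finset.sum_sub_distrib]

lemma psComp_pow (f : PowerSeries ℚ) (k : ℕ) :
    psComp (f ^ k) logOneAdd = psComp f logOneAdd ^ k := by
  induction k with
  | zero => simpa using psComp_one
  | succ j ih => rw [pow_succ, pow_succ, psComp_mul, ih]

lemma onePlusPow_eq (x : ℚ) : onePlusPow x = psComp (expMul x) logOneAdd := by
  ext n
  rw [onePlusPow, psComp, psComp, coeff_mk, coeff_mk]
  refine Finset.sum_congr rfl fun m _ => ?_
  rw [PowerSeries.coeff_exp, expMul, coeff_mk, smul_pow, map_smul, smul_eq_mul]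
  simp only [eq_ratCast, Rat.cast_div, Rat.cast_one]
  push_cast
  ring

theorem daehee_eq_stirling_sum_bernoulli
    (r : ℕ) (hr : 1 ≤ r) (x : ℚ) (D B : ℕ → ℚ) (S1 : ℕ → ℕ → ℚ)
    (hD : logOneAdd ^ r * onePlusPow x =
      PowerSeries.X ^ r * (PowerSeries.mk fun k => D k / (k.factorial : ℚ)))
    (hB : (PowerSeries.X : PowerSeries ℚ) ^ r * expMul x =
      (PowerSeries.exp ℚ - 1) ^ r * (PowerSeries.mk fun k => B k / (k.factorial : ℚ)))
    (hS1 : ∀ m, logOneAdd ^ m =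
      (m.factorial : ℚ) • (PowerSeries.mk fun k => S1 k m / (k.factorial : ℚ))) :
    ∀ n, D n = ∑ m ∈ Finset.range (n + 1), S1 n m * B m := by

  set Ds : PowerSeries ℚ := PowerSeries.mk fun k => D k / (k.factorial : ℚ) with hDs
  set Bs : PowerSeries ℚ := PowerSeries.mk fun k => B k / (k.factorial : ℚ) with hBs
  -- apply composition with logOneAdd to hB
  have h1 : psComp (X ^ r * expMul x) logOneAdd
      = psComp ((PowerSeries.exp ℚ - 1) ^ r * Bs) logOneAdd := by rw [hB]
  rw [psComp_mul, psComp_mul, psComp_pow, psComp_pow, psComp_X, psComp_sub,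
    psComp_exp, psComp_one] at h1
  have h2 : (1 + X - 1 : PowerSeries ℚ) = X := by ring
  rw [h2, ← onePlusPow_eq] at h1
  -- combine with hD
  have h3 : (X : PowerSeries ℚ) ^ r * Ds = X ^ r * psComp Bs logOneAdd := by
    rw [← hD, h1]
  have hXr : (X : PowerSeries ℚ) ^ r ≠ 0 := pow_ne_zero r X_ne_zero
  have h4 : Ds = psComp Bs logOneAdd := mul_left_cancel₀ hXr h3
  -- extract coefficients
  intro n
  have h5 := congrArg (coeff n) h4
  rw [hDs, coeff_mk, coeff_psComp _ (Nat.lt_succ_self n)] at h5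
  have hfn : ((n.factorial : ℚ)) ≠ 0 := Nat.cast_ne_zero.mpr n.factorial_ne_zero
  have h6 : ∀ m ∈ Finset.range (n+1),
      coeff m Bs * coeff n (logOneAdd ^ m)
        = S1 n m * B m / (n.factorial : ℚ) := by
    intro m _
    have hm := congrArg (coeff n) (hS1 m)
    rw [map_smul, coeff_mk, smul_eq_mul] at hm
    rw [hm, hBs, coeff_mk]
    have hfm : ((m.factorial : ℚ)) ≠ 0 := Nat.cast_ne_zero.mpr m.factorial_ne_zero
    field_simp
  rw [Finset.sum_congr rfl h6, ← Finset.sum_div] at h5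
  field_simp at h5
  rw [h5]
end

section
/- For all r, s ∈ ℕ with r, s ≥ 1, every n ∈ ℕ, and every x ∈ ℚ, one has Σ_{m=0}^{n} C(n,m) · D_m^{(r)}(x) · Ch_{n−m}^{(s)} = Σ_{m=0}^{n} BE_m^{(r,s)}(x) · S_1(n,m), where D_m^{(r)}(x) are the Daehee polynomials of order r, Ch_{n−m}^{(s)} = Ch_{n−m}^{(s)}(0) are the Changhee numbers of order s, BE_m^{(r,s)}(x) are the Bernoulli–Euler mixed-type polynomials of order (r,s), and S_1(n,m) are the signed Stirling numbers of the first kind. -/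
open PowerSeries Finset

namespace DCaux

lemma coeff_log (n : ℕ) :
    PowerSeries.coeff n logOneAdd = if n = 0 then 0 else (-1 : ℚ) ^ (n + 1) / n := by
  simp [logOneAdd]

lemma constCoeff_log : PowerSeries.constantCoeff logOneAdd = 0 := by
  have := coeff_log 0
  simpa [PowerSeries.coeff_zero_eq_constantCoeff] using this

lemma coeff_pow_eq_zero {g : PowerSeries ℚ} (hg : PowerSeries.constantCoeff g = 0)
    {n m : ℕ} (hnm : n < m) : PowerSeries.coeff n (g ^ m) = 0 := by
  have hdvd : (PowerSeries.X : PowerSeries ℚ) ^ m ∣ g ^ m :=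
    pow_dvd_pow_of_dvd (PowerSeries.X_dvd_iff.mpr hg) m
  exact (PowerSeries.X_pow_dvd_iff.mp hdvd) n hnm

lemma coeff_psComp (f g : PowerSeries ℚ) (n : ℕ) :
    PowerSeries.coeff n (psComp f g) =
      ∑ m ∈ Finset.range (n + 1),
        PowerSeries.coeff m f * PowerSeries.coeff n (g ^ m) := by
  simp [psComp]

lemma coeff_psComp_ext {g : PowerSeries ℚ} (hg : PowerSeries.constantCoeff g = 0)
    (f : PowerSeries ℚ) {n N : ℕ} (hN : n < N) :
    PowerSeries.coeff n (psComp f g) =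
      ∑ m ∈ Finset.range N,
        PowerSeries.coeff m f * PowerSeries.coeff n (g ^ m) := by
  rw [coeff_psComp]
  apply Finset.sum_subset
  · exact Finset.range_subset_range.mpr hN
  · intro m _ hm
    have : n < m := by
      simp only [Finset.mem_range, not_lt] at hm
      omega
    rw [coeff_pow_eq_zero hg this, mul_zero]

lemma psComp_one (g : PowerSeries ℚ) : psComp 1 g = 1 := by
  ext n
  rw [coeff_psComp]
  rw [Finset.sum_eq_single 0]
  · simp
  · intro m _ hm
    simp [PowerSeries.coeff_one, hm]
  · intro h
    simp at h

lemma psComp_add (f₁ f₂ g : PowerSeries ℚ) :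
    psComp (f₁ + f₂) g = psComp f₁ g + psComp f₂ g := by
  ext n
  simp [coeff_psComp, add_mul, Finset.sum_add_distrib]

lemma psComp_sub (f₁ f₂ g : PowerSeries ℚ) :
    psComp (f₁ - f₂) g = psComp f₁ g - psComp f₂ g := by
  ext n
  simp [coeff_psComp, sub_mul, Finset.sum_sub_distrib]

lemma psComp_mul {g : PowerSeries ℚ} (hg : PowerSeries.constantCoeff g = 0)
    (f₁ f₂ : PowerSeries ℚ) :
    psComp (f₁ * f₂) g = psComp f₁ g * psComp f₂ g := by
  ext n
  have key : PowerSeries.coeff n (psComp f₁ g * psComp f₂ g)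
      = ∑ q ∈ (Finset.range (n + 1)) ×ˢ (Finset.range (n + 1)),
          PowerSeries.coeff q.1 f₁ * PowerSeries.coeff q.2 f₂ *
            PowerSeries.coeff n (g ^ (q.1 + q.2)) := by
    rw [PowerSeries.coeff_mul]
    have h1 : ∀ p ∈ Finset.HasAntidiagonal.antidiagonal n,
        PowerSeries.coeff p.1 (psComp f₁ g) * PowerSeries.coeff p.2 (psComp f₂ g)
        = ∑ q ∈ (Finset.range (n + 1)) ×ˢ (Finset.range (n + 1)),
            PowerSeries.coeff q.1 f₁ * PowerSeries.coeff q.2 f₂ *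
              (PowerSeries.coeff p.1 (g ^ q.1) * PowerSeries.coeff p.2 (g ^ q.2)) := by
      intro p hp
      have hp' := Finset.HasAntidiagonal.mem_antidiagonal.mp hp
      have hp1 : p.1 < n + 1 := by omega
      have hp2 : p.2 < n + 1 := by omega
      rw [coeff_psComp_ext hg f₁ hp1, coeff_psComp_ext hg f₂ hp2, Finset.sum_mul_sum,
        ← Finset.sum_product']
      exact Finset.sum_congr rfl fun q _ => by ring
    rw [Finset.sum_congr rfl h1, Finset.sum_comm]
    refine Finset.sum_congr rfl fun q _ => ?_
    rw [← Finset.mul_sum]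
    congr 1
    rw [pow_add, PowerSeries.coeff_mul]
  rw [key, coeff_psComp]
  have h2 : ∀ m ∈ Finset.range (n + 1),
      PowerSeries.coeff m (f₁ * f₂) * PowerSeries.coeff n (g ^ m)
      = ∑ q ∈ Finset.HasAntidiagonal.antidiagonal m,
          PowerSeries.coeff q.1 f₁ * PowerSeries.coeff q.2 f₂ *
            PowerSeries.coeff n (g ^ (q.1 + q.2)) := by
    intro m _
    rw [PowerSeries.coeff_mul, Finset.sum_mul]
    refine Finset.sum_congr rfl fun q hq => ?_
    rw [Finset.HasAntidiagonal.mem_antidiagonal.mp hq]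
  rw [Finset.sum_congr rfl h2]
  have hdisj : (↑(Finset.range (n + 1)) : Set ℕ).PairwiseDisjoint Finset.HasAntidiagonal.antidiagonal := by
    intro i _ j _ hij
    refine Finset.disjoint_left.mpr fun p hpi hpj => hij ?_
    rw [← Finset.HasAntidiagonal.mem_antidiagonal.mp hpi, ← Finset.HasAntidiagonal.mem_antidiagonal.mp hpj]
  rw [← Finset.sum_biUnion hdisj]
  have hset : (Finset.range (n + 1)).biUnion Finset.HasAntidiagonal.antidiagonal
      = (Finset.range (n + 1) ×ˢ Finset.range (n + 1)).filter (fun q => q.1 + q.2 ≤ n) := by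
    ext ⟨a, b⟩
    simp only [Finset.mem_biUnion, Finset.mem_range, Finset.HasAntidiagonal.mem_antidiagonal,
      Finset.mem_filter, Finset.mem_product]
    constructor
    · rintro ⟨m, hm, rfl⟩; omega
    · rintro ⟨⟨_, _⟩, h⟩; exact ⟨a + b, by omega, rfl⟩
  rw [hset]
  symm
  apply (Finset.sum_filter_of_ne ?_).symm
  intro q _ hq
  by_contra h
  push_neg at h
  exact hq (by rw [coeff_pow_eq_zero hg (by omega : n < q.1 + q.2), mul_zero])

lemma psComp_pow {g : PowerSeries ℚ} (hg : PowerSeries.constantCoeff g = 0)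
    (f : PowerSeries ℚ) (k : ℕ) : psComp (f ^ k) g = (psComp f g) ^ k := by
  induction k with
  | zero => simpa using psComp_one g
  | succ k ih => rw [pow_succ, psComp_mul hg, ih, pow_succ]

lemma psComp_X {g : PowerSeries ℚ} (hg : PowerSeries.constantCoeff g = 0) :
    psComp PowerSeries.X g = g := by
  ext n
  rw [coeff_psComp]
  match n with
  | 0 =>
    simp [PowerSeries.coeff_zero_eq_constantCoeff, hg]
  | n + 1 =>
    rw [Finset.sum_eq_single 1]
    · simp
    · intro m _ hm
      simp [PowerSeries.coeff_X, hm]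
    · intro h
      exact absurd (Finset.mem_range.mpr (by omega)) h

lemma psComp_two (g : PowerSeries ℚ) : psComp 2 g = 2 := by
  have h2 : (2 : PowerSeries ℚ) = 1 + 1 := by norm_num
  rw [h2, psComp_add, psComp_one]

lemma psComp_expMul (x : ℚ) (g : PowerSeries ℚ) :
    psComp (expMul x) g = psComp (PowerSeries.exp ℚ) (x • g) := by
  ext n
  rw [coeff_psComp, coeff_psComp]
  refine Finset.sum_congr rfl fun m _ => ?_
  rw [smul_pow]
  rw [expMul, PowerSeries.coeff_mk, PowerSeries.coeff_exp]
  rw [map_smul]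
  simp [Algebra.algebraMap_self, smul_eq_mul]
  ring

lemma coeff_dL (n : ℕ) :
    PowerSeries.coeff n (PowerSeries.derivative ℚ logOneAdd) = (-1 : ℚ) ^ n := by
  rw [PowerSeries.coeff_derivative]
  simp only [logOneAdd, PowerSeries.coeff_mk, Nat.succ_ne_zero, if_false]
  have hn : ((n : ℚ) + 1) ≠ 0 := by positivity
  push_cast
  field_simp
  ring

lemma onePlusX_mul_dL :
    (1 + PowerSeries.X) * (PowerSeries.derivative ℚ logOneAdd) = 1 := by
  ext n
  rw [add_mul, one_mul, map_add, coeff_dL]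
  match n with
  | 0 => simp [PowerSeries.coeff_zero_eq_constantCoeff]
  | n + 1 =>
    rw [PowerSeries.coeff_succ_X_mul, coeff_dL]
    simp [PowerSeries.coeff_one, pow_succ]

lemma dL_pow (m : ℕ) :
    (1 + PowerSeries.X) * (PowerSeries.derivative ℚ (logOneAdd ^ m))
      = (m : ℚ) • logOneAdd ^ (m - 1) := by
  rw [Derivation.leibniz_pow, smul_eq_mul, mul_smul_comm,
    show (1 + PowerSeries.X) * (logOneAdd ^ (m - 1) * PowerSeries.derivative ℚ logOneAdd)
      = logOneAdd ^ (m - 1) * ((1 + PowerSeries.X) * PowerSeries.derivative ℚ logOneAdd) by ring,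
    onePlusX_mul_dL, mul_one]
  exact (Nat.cast_smul_eq_nsmul ℚ m _).symm

lemma rec_a (n m : ℕ) :
    ((n : ℚ) + 1) * PowerSeries.coeff (n + 1) (logOneAdd ^ m)
      + (n : ℚ) * PowerSeries.coeff n (logOneAdd ^ m)
      = (m : ℚ) * PowerSeries.coeff n (logOneAdd ^ (m - 1)) := by
  have h := congrArg (PowerSeries.coeff n) (dL_pow m)
  rw [add_mul, one_mul, map_add, map_smul, PowerSeries.coeff_derivative, smul_eq_mul] at h
  match n with
  | 0 =>
    have hX : PowerSeries.coeff 0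
        (PowerSeries.X * PowerSeries.derivative ℚ (logOneAdd ^ m)) = 0 := by
      simp [PowerSeries.coeff_zero_eq_constantCoeff]
    rw [hX] at h
    push_cast at h ⊢
    norm_num at h ⊢
    linarith [h]
  | k + 1 =>
    rw [PowerSeries.coeff_succ_X_mul, PowerSeries.coeff_derivative] at h
    push_cast
    push_cast at h
    linarith [h]

/-- `c n` is the `n`-th coefficient of `exp (log (1+t))`. -/
noncomputable def c (n : ℕ) : ℚ :=
  ∑ m ∈ Finset.range (n + 1),
    (1 / (m.factorial : ℚ)) * PowerSeries.coeff n (logOneAdd ^ m)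

lemma c_rec (n : ℕ) : ((n : ℚ) + 1) * c (n + 1) = (1 - (n : ℚ)) * c n := by
  have e1 : ((n : ℚ) + 1) * c (n + 1)
      = ∑ m ∈ Finset.range (n + 2),
          ((1 / (m.factorial : ℚ)) * ((m : ℚ) * PowerSeries.coeff n (logOneAdd ^ (m - 1)))
            - (1 / (m.factorial : ℚ)) * ((n : ℚ) * PowerSeries.coeff n (logOneAdd ^ m))) := by
    rw [c, Finset.mul_sum]
    refine Finset.sum_congr rfl fun m _ => ?_
    have := rec_a n m
    field_simp
    linarith [this]
  rw [e1, Finset.sum_sub_distrib]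
  have e2 : ∑ m ∈ Finset.range (n + 2),
      (1 / (m.factorial : ℚ)) * ((m : ℚ) * PowerSeries.coeff n (logOneAdd ^ (m - 1))) = c n := by
    rw [Finset.sum_range_succ']
    simp only [Nat.cast_zero, zero_mul, mul_zero, add_zero]
    rw [c]
    refine Finset.sum_congr rfl fun i _ => ?_
    have hfac : ((i + 1).factorial : ℚ) = ((i : ℚ) + 1) * (i.factorial : ℚ) := by
      rw [Nat.factorial_succ]; push_cast; ring
    have hi : ((i.factorial : ℚ)) ≠ 0 := by
      exact_mod_cast Nat.factorial_ne_zero i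
    have hi1 : ((i : ℚ) + 1) ≠ 0 := by positivity
    rw [hfac]
    simp only [Nat.add_sub_cancel, Nat.cast_add, Nat.cast_one]
    field_simp
  have e3 : ∑ m ∈ Finset.range (n + 2),
      (1 / (m.factorial : ℚ)) * ((n : ℚ) * PowerSeries.coeff n (logOneAdd ^ m))
        = (n : ℚ) * c n := by
    rw [Finset.sum_range_succ, coeff_pow_eq_zero constCoeff_log (by omega), mul_zero, mul_zero,
      add_zero, c, Finset.mul_sum]
    exact Finset.sum_congr rfl fun m _ => by ring
  rw [e2, e3]
  ring

lemma c_zero : c 0 = 1 := by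
  simp [c]

lemma c_one : c 1 = 1 := by
  have := c_rec 0
  rw [c_zero] at this
  push_cast at this
  linarith

lemma c_big (k : ℕ) : c (k + 2) = 0 := by
  induction k with
  | zero =>
    have := c_rec 1
    rw [c_one] at this
    push_cast at this
    linarith
  | succ k ih =>
    have h2 := c_rec (k + 2)
    rw [ih, mul_zero] at h2
    have e : k + 1 + 2 = k + 2 + 1 := by omega
    rw [e]
    rcases mul_eq_zero.mp h2 with h | h
    · exfalso
      have : ((k + 2 : ℕ) : ℚ) + 1 > 0 := by positivity
      linarith
    · exact h

/-- The key analytic identity: `exp (log (1+t)) = 1 + t`. -/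
lemma E_eq : psComp (PowerSeries.exp ℚ) logOneAdd = 1 + PowerSeries.X := by
  ext n
  have hc : PowerSeries.coeff n (psComp (PowerSeries.exp ℚ) logOneAdd) = c n := by
    rw [coeff_psComp, c]
    refine Finset.sum_congr rfl fun m _ => ?_
    rw [PowerSeries.coeff_exp]
    norm_num
  rw [hc, map_add]
  match n with
  | 0 => rw [c_zero]; simp
  | 1 => rw [c_one]; norm_num [PowerSeries.coeff_one, PowerSeries.coeff_X]
  | k + 2 =>
    rw [c_big]
    norm_num [PowerSeries.coeff_one, PowerSeries.coeff_X]
    omega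

lemma onePlusPow_zero : onePlusPow (0 : ℚ) = 1 := by
  rw [onePlusPow, zero_smul]
  ext n
  rw [coeff_psComp]
  rw [Finset.sum_eq_single 0]
  · simp
  · intro m _ hm
    rw [zero_pow hm, map_zero, mul_zero]
  · intro h
    simp at h

end DCaux

theorem daehee_changhee_sum_eq_BE_stirling_sum
    (r s : ℕ) (hr : 1 ≤ r) (hs : 1 ≤ s) (n : ℕ) (x : ℚ)
    (D Ch BE : ℕ → ℚ) (S1 : ℕ → ℕ → ℚ)
    (hD : logOneAdd ^ r * onePlusPow x =
      PowerSeries.X ^ r * (PowerSeries.mk fun k => D k / (k.factorial : ℚ)))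
    (hCh : (2 : PowerSeries ℚ) ^ s * onePlusPow (0 : ℚ) =
      (PowerSeries.X + 2) ^ s * (PowerSeries.mk fun k => Ch k / (k.factorial : ℚ)))
    (hBE : (2 : PowerSeries ℚ) ^ s * PowerSeries.X ^ r * expMul x =
      (PowerSeries.exp ℚ + 1) ^ s * (PowerSeries.exp ℚ - 1) ^ r * (PowerSeries.mk fun k => BE k / (k.factorial : ℚ)))
    (hS1 : ∀ m, logOneAdd ^ m =
      (m.factorial : ℚ) • (PowerSeries.mk fun k => S1 k m / (k.factorial : ℚ))) :
    ∑ m ∈ Finset.range (n + 1), (n.choose m : ℚ) * D m * Ch (n - m) =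
      ∑ m ∈ Finset.range (n + 1), BE m * S1 n m := by
  classical
  set Dser : PowerSeries ℚ := PowerSeries.mk fun k => D k / (k.factorial : ℚ) with hDser
  set Chser : PowerSeries ℚ := PowerSeries.mk fun k => Ch k / (k.factorial : ℚ) with hChser
  set BEser : PowerSeries ℚ := PowerSeries.mk fun k => BE k / (k.factorial : ℚ) with hBEser
  have hL0 := DCaux.constCoeff_log
  rw [DCaux.onePlusPow_zero, mul_one] at hCh
  -- step 1 : X^r (X+2)^s (Dser Chser) = 2^s L^r (1+t)^x
  have step1 : PowerSeries.X ^ r * (PowerSeries.X + 2) ^ s * (Dser * Chser)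
      = 2 ^ s * (logOneAdd ^ r * onePlusPow x) := by
    calc PowerSeries.X ^ r * (PowerSeries.X + 2) ^ s * (Dser * Chser)
        = (PowerSeries.X ^ r * Dser) * ((PowerSeries.X + 2) ^ s * Chser) := by ring
      _ = (logOneAdd ^ r * onePlusPow x) * 2 ^ s := by rw [← hD, ← hCh]
      _ = 2 ^ s * (logOneAdd ^ r * onePlusPow x) := by ring
  -- step 2 : compose hBE with log(1+t)
  have hcomp := congrArg (fun f => psComp f logOneAdd) hBE
  simp only [DCaux.psComp_mul hL0, DCaux.psComp_pow hL0, DCaux.psComp_two,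
    DCaux.psComp_X hL0, DCaux.psComp_expMul, DCaux.psComp_add, DCaux.psComp_sub,
    DCaux.psComp_one, DCaux.E_eq] at hcomp
  have hOP : psComp (PowerSeries.exp ℚ) (x • logOneAdd) = onePlusPow x := rfl
  rw [hOP] at hcomp
  -- hcomp : 2^s * logOneAdd^r * onePlusPow x = (1+X+1)^s * (1+X-1)^r * psComp BEser logOneAdd
  have step2 : PowerSeries.X ^ r * (PowerSeries.X + 2) ^ s * psComp BEser logOneAdd
      = 2 ^ s * (logOneAdd ^ r * onePlusPow x) := by
    have e1 : (1 + PowerSeries.X + 1 : PowerSeries ℚ) = PowerSeries.X + 2 := by ring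
    have e2 : (1 + PowerSeries.X - 1 : PowerSeries ℚ) = PowerSeries.X := by ring
    rw [e1, e2] at hcomp
    linear_combination -hcomp
  -- cancel the common nonzero factor
  have hXne : (PowerSeries.X : PowerSeries ℚ) ≠ 0 := PowerSeries.X_ne_zero
  have hX2ne : (PowerSeries.X + 2 : PowerSeries ℚ) ≠ 0 := by
    intro h
    have h2 := congrArg (PowerSeries.constantCoeff) h
    rw [map_add, map_zero] at h2
    simp only [PowerSeries.constantCoeff_X, zero_add, map_ofNat] at h2
    norm_num at h2
  have hne : (PowerSeries.X ^ r * (PowerSeries.X + 2) ^ s : PowerSeries ℚ) ≠ 0 :=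
    mul_ne_zero (pow_ne_zero _ hXne) (pow_ne_zero _ hX2ne)
  have key : Dser * Chser = psComp BEser logOneAdd := by
    apply mul_left_cancel₀ hne
    calc PowerSeries.X ^ r * (PowerSeries.X + 2) ^ s * (Dser * Chser)
        = 2 ^ s * (logOneAdd ^ r * onePlusPow x) := step1
      _ = PowerSeries.X ^ r * (PowerSeries.X + 2) ^ s * psComp BEser logOneAdd := step2.symm
  -- extract coefficient n
  have hfacne : ∀ k : ℕ, ((k.factorial : ℚ)) ≠ 0 := fun k =>
    Nat.cast_ne_zero.mpr (Nat.factorial_ne_zero k)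
  have hL : (n.factorial : ℚ) * PowerSeries.coeff n (Dser * Chser)
      = ∑ m ∈ Finset.range (n + 1), (n.choose m : ℚ) * D m * Ch (n - m) := by
    rw [PowerSeries.coeff_mul, Finset.Nat.sum_antidiagonal_eq_sum_range_succ_mk, Finset.mul_sum]
    refine Finset.sum_congr rfl fun m hm => ?_
    have hmn : m ≤ n := by
      have := Finset.mem_range.mp hm; omega
    rw [hDser, hChser]
    simp only [PowerSeries.coeff_mk]
    rw [Nat.cast_choose ℚ hmn]
    have h1 := hfacne m
    have h2 := hfacne (n - m)
    field_simp
  have hR : (n.factorial : ℚ) * PowerSeries.coeff n (psComp BEser logOneAdd)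
      = ∑ m ∈ Finset.range (n + 1), BE m * S1 n m := by
    rw [DCaux.coeff_psComp, Finset.mul_sum]
    refine Finset.sum_congr rfl fun m _ => ?_
    have h1 : PowerSeries.coeff n (logOneAdd ^ m)
        = (m.factorial : ℚ) * (S1 n m / (n.factorial : ℚ)) := by
      rw [hS1 m, map_smul, smul_eq_mul, PowerSeries.coeff_mk]
    rw [h1, hBEser]
    simp only [PowerSeries.coeff_mk]
    have h2 := hfacne m
    have h3 := hfacne n
    field_simp
  rw [← hL, ← hR, key]
end

section
/- For all r, s ∈ ℕ with r, s ≥ 1, every n ∈ ℕ, and every x ∈ ℚ, the Daehee–Changhee mixed-type polynomial of order (r,s) satisfies DC_n^{(r,s)}(x) = Σ_{m=0}^{n} C(n,m) · D_m^{(r)}(x) · Ch_{n−m}^{(s)}, where D_m^{(r)}(x) are the Daehee polynomials of order r and Ch_{n−m}^{(s)} = Ch_{n−m}^{(s)}(0) are the Changhee numbers of order s. -/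
lemma onePlusPow_zero : onePlusPow (0 : ℚ) = 1 := by
  unfold onePlusPow psComp
  rw [zero_smul]
  ext k
  simp only [PowerSeries.coeff_mk]
  cases k with
  | zero => simp [PowerSeries.exp]
  | succ k =>
    rw [PowerSeries.coeff_one, if_neg (Nat.succ_ne_zero k)]
    apply Finset.sum_eq_zero
    intro m _
    cases m with
    | zero => simp [PowerSeries.coeff_one]
    | succ m => rw [zero_pow (Nat.succ_ne_zero m)]; simp

theorem daehee_changhee_mixed_eq_sum
    (r s : ℕ) (hr : 1 ≤ r) (hs : 1 ≤ s) (n : ℕ) (x : ℚ) (DC D Ch : ℕ → ℚ)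
    (hDC : logOneAdd ^ r * (2 : PowerSeries ℚ) ^ s * onePlusPow x =
      PowerSeries.X ^ r * (PowerSeries.X + 2) ^ s * (PowerSeries.mk fun k => DC k / (k.factorial : ℚ)))
    (hD : logOneAdd ^ r * onePlusPow x =
      PowerSeries.X ^ r * (PowerSeries.mk fun k => D k / (k.factorial : ℚ)))
    (hCh : (2 : PowerSeries ℚ) ^ s * onePlusPow (0 : ℚ) =
      (PowerSeries.X + 2) ^ s * (PowerSeries.mk fun k => Ch k / (k.factorial : ℚ))) :
    DC n = ∑ m ∈ Finset.range (n + 1), (n.choose m : ℚ) * D m * Ch (n - m) := by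
  rw [onePlusPow_zero, mul_one] at hCh
  -- key identity of power series
  have hkey : (PowerSeries.X ^ r * (PowerSeries.X + 2) ^ s : PowerSeries ℚ) *
      (PowerSeries.mk fun k => DC k / (k.factorial : ℚ)) =
      (PowerSeries.X ^ r * (PowerSeries.X + 2) ^ s) *
      ((PowerSeries.mk fun k => D k / (k.factorial : ℚ)) *
       (PowerSeries.mk fun k => Ch k / (k.factorial : ℚ))) := by
    calc (PowerSeries.X ^ r * (PowerSeries.X + 2) ^ s : PowerSeries ℚ) *
        (PowerSeries.mk fun k => DC k / (k.factorial : ℚ))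
        = logOneAdd ^ r * (2 : PowerSeries ℚ) ^ s * onePlusPow x := by
          rw [hDC]
      _ = (logOneAdd ^ r * onePlusPow x) * (2 : PowerSeries ℚ) ^ s := by ring
      _ = (PowerSeries.X ^ r * (PowerSeries.mk fun k => D k / (k.factorial : ℚ))) *
            ((PowerSeries.X + 2) ^ s * (PowerSeries.mk fun k => Ch k / (k.factorial : ℚ))) := by
          rw [hD, hCh]
      _ = _ := by ring
  have hne : (PowerSeries.X ^ r * (PowerSeries.X + 2) ^ s : PowerSeries ℚ) ≠ 0 := by
    apply mul_ne_zero
    · exact pow_ne_zero _ PowerSeries.X_ne_zero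
    · apply pow_ne_zero
      intro h
      have h2 : PowerSeries.constantCoeff (R := ℚ) (PowerSeries.X + 2) = 2 := by
        simp [map_ofNat]
      rw [h] at h2
      simp at h2
  have heq := mul_left_cancel₀ hne hkey
  have hcoeff := congrArg (PowerSeries.coeff (R := ℚ) n) heq
  rw [PowerSeries.coeff_mk, PowerSeries.coeff_mul] at hcoeff
  simp only [PowerSeries.coeff_mk] at hcoeff
  rw [Finset.Nat.sum_antidiagonal_eq_sum_range_succ
      (f := fun i j => (D i / (i.factorial : ℚ)) * (Ch j / (j.factorial : ℚ)))] at hcoeff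
  have hn : (n.factorial : ℚ) ≠ 0 := Nat.cast_ne_zero.mpr (Nat.factorial_ne_zero n)
  have : DC n = (n.factorial : ℚ) *
      ∑ m ∈ Finset.range (n + 1), D m / (m.factorial : ℚ) * (Ch (n - m) / ((n - m).factorial : ℚ)) := by
    rw [← hcoeff]; field_simp
  rw [this, Finset.mul_sum]
  apply Finset.sum_congr rfl
  intro m hm
  have hmn : m ≤ n := Nat.lt_succ_iff.mp (Finset.mem_range.mp hm)
  have key : (n.factorial : ℚ) = n.choose m * m.factorial * (n - m).factorial := by
    exact_mod_cast (Nat.choose_mul_factorial_mul_factorial hmn).symm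
  have h1 : (m.factorial : ℚ) ≠ 0 := Nat.cast_ne_zero.mpr (Nat.factorial_ne_zero m)
  have h2 : ((n - m).factorial : ℚ) ≠ 0 := Nat.cast_ne_zero.mpr (Nat.factorial_ne_zero _)
  rw [key]
  field_simp
end

section
/- For all r, s ∈ ℕ with r, s ≥ 1, every n ∈ ℕ, and every x ∈ ℚ, one has Σ_{m=0}^{n} DC_m^{(r,s)}(x) · S_2(n,m) = Σ_{l=0}^{n} C(n,l) · B_l^{(r)}(x) · E_{n−l}^{(s)}, where DC_m^{(r,s)}(x) are the Daehee–Changhee mixed-type polynomials of order (r,s), S_2(n,m) are the Stirling numbers of the second kind, B_l^{(r)}(x) are the Bernoulli polynomials of order r, and E_{n−l}^{(s)} = E_{n−l}^{(s)}(0) are the Euler numbers of order s. -/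
open PowerSeries Finset

namespace PSC

variable {g : PowerSeries ℚ}

lemma coeff_pow_eq_zero (hg : constantCoeff g = 0) {n m : ℕ} (h : n < m) :
    coeff n (g ^ m) = 0 := by
  have hdvd : (X : PowerSeries ℚ) ^ m ∣ g ^ m := pow_dvd_pow_of_dvd (X_dvd_iff.2 hg) m
  obtain ⟨c, hc⟩ := hdvd
  rw [hc]
  rcases Nat.lt_or_ge n m with h' | h'
  · -- coeff n (X^m * c) = 0 for n < m
    rw [PowerSeries.coeff_mul]
    apply Finset.sum_eq_zero
    intro p hp
    rw [Finset.HasAntidiagonal.mem_antidiagonal] at hp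
    rw [PowerSeries.coeff_X_pow]
    have : p.1 ≠ m := by omega
    simp [this]
  · omega

lemma coeff_aeval (hg : constantCoeff g = 0) (P : Polynomial ℚ) (n : ℕ) :
    coeff n (Polynomial.aeval g P) =
      ∑ m ∈ range (n + 1), P.coeff m * coeff n (g ^ m) := by
  set N := max (n + 1) (P.natDegree + 1) with hN
  have hdeg : P.natDegree < N := lt_of_lt_of_le (Nat.lt_succ_self _) (le_max_right _ _)
  rw [Polynomial.aeval_eq_sum_range' hdeg, map_sum]
  have : ∀ i ∈ range N, coeff n (P.coeff i • g ^ i) = P.coeff i * coeff n (g ^ i) := by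
    intro i _; rw [map_smul, smul_eq_mul]
  rw [Finset.sum_congr rfl this]
  refine (Finset.sum_subset (Finset.range_subset_range.2 (le_max_left _ _)) ?_).symm
  intro i _ hni
  have hn : n < i := by
    rw [Finset.mem_range, not_lt] at hni; omega
  rw [coeff_pow_eq_zero hg hn, mul_zero]

lemma coeff_psComp_eq (hg : constantCoeff g = 0) (f : PowerSeries ℚ) {n N : ℕ}
    (h : n < N) :
    coeff n (psComp f g) = coeff n (Polynomial.aeval g (trunc N f)) := by
  rw [psComp, coeff_mk, coeff_aeval hg]
  refine Finset.sum_congr rfl fun m hm => ?_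
  rw [Finset.mem_range] at hm
  rw [coeff_trunc]
  have : m < N := by omega
  simp [this]

lemma psComp_add (f₁ f₂ : PowerSeries ℚ) :
    psComp (f₁ + f₂) g = psComp f₁ g + psComp f₂ g := by
  ext n
  simp [psComp, add_mul, Finset.sum_add_distrib]

lemma psComp_mul (hg : constantCoeff g = 0) (f₁ f₂ : PowerSeries ℚ) :
    psComp (f₁ * f₂) g = psComp f₁ g * psComp f₂ g := by
  ext n
  rw [coeff_psComp_eq hg _ (Nat.lt_succ_self n), PowerSeries.coeff_mul]
  have hsum : ∀ p ∈ Finset.HasAntidiagonal.antidiagonal n,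
      coeff p.1 (psComp f₁ g) * coeff p.2 (psComp f₂ g) =
      coeff p.1 (Polynomial.aeval g (trunc (n+1) f₁)) *
        coeff p.2 (Polynomial.aeval g (trunc (n+1) f₂)) := by
    intro p hp
    rw [Finset.HasAntidiagonal.mem_antidiagonal] at hp
    rw [coeff_psComp_eq hg _ (by omega : p.1 < n + 1),
        coeff_psComp_eq hg _ (by omega : p.2 < n + 1)]
  rw [Finset.sum_congr rfl hsum, ← PowerSeries.coeff_mul, ← map_mul]
  -- now both sides are coeff n of aeval of polynomials agreeing below n+1
  rw [coeff_aeval hg, coeff_aeval hg]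
  refine Finset.sum_congr rfl fun m hm => ?_
  rw [Finset.mem_range] at hm
  congr 1
  have h2 := trunc_trunc_mul_trunc (n := n + 1) f₁ f₂
  have h4 : coeff m ((trunc (n+1) f₁ : PowerSeries ℚ) * (trunc (n+1) f₂ : PowerSeries ℚ))
      = coeff m (f₁ * f₂) := by
    have := congrArg (fun q => Polynomial.coeff q m) h2
    simpa only [coeff_trunc, hm, if_pos] using this
  rw [coeff_trunc, if_pos hm, ← h4, ← Polynomial.coe_mul, Polynomial.coeff_coe]

lemma psComp_C (a : ℚ) : psComp (C a) g = C a := by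
  ext n
  rw [psComp, coeff_mk]
  rw [Finset.sum_eq_single 0]
  · simp [PowerSeries.coeff_C, PowerSeries.coeff_one, mul_ite]
  · intro m _ hm
    simp [PowerSeries.coeff_C, hm]
  · simp

lemma psComp_one : psComp 1 g = 1 := by
  have := psComp_C (g := g) 1
  simpa using this

lemma psComp_X (hg : constantCoeff g = 0) : psComp X g = g := by
  ext n
  rw [psComp, coeff_mk]
  rcases Nat.eq_zero_or_pos n with rfl | hn
  · have h0 : coeff 0 g = 0 := by
      rw [PowerSeries.coeff_zero_eq_constantCoeff_apply, hg]
    simp [h0]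
  · rw [Finset.sum_eq_single 1]
    · simp
    · intro m _ hm
      simp [PowerSeries.coeff_X, hm]
    · intro h
      rw [Finset.mem_range] at h; omega

/-- `psComp · g` as a ring homomorphism, when `g` has zero constant term. -/
noncomputable def compHom (hg : constantCoeff g = 0) :
    PowerSeries ℚ →+* PowerSeries ℚ where
  toFun f := psComp f g
  map_one' := psComp_one
  map_mul' := psComp_mul hg
  map_zero' := by
    have := psComp_C (g := g) 0
    simpa using this
  map_add' := psComp_add

@[simp] lemma compHom_apply (hg : constantCoeff g = 0) (f : PowerSeries ℚ) :
    compHom hg f = psComp f g := rfl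

lemma constantCoeff_psComp (f : PowerSeries ℚ) :
    constantCoeff (psComp f g) = coeff 0 f := by
  rw [← PowerSeries.coeff_zero_eq_constantCoeff_apply, psComp, coeff_mk]
  simp

lemma derivative_aeval (P : Polynomial ℚ) :
    d⁄dX ℚ (Polynomial.aeval g P) =
      Polynomial.aeval g (Polynomial.derivative P) * d⁄dX ℚ g := by
  induction P using Polynomial.induction_on' with
  | add p q hp hq => simp only [map_add, hp, hq, add_mul]
  | monomial m a =>
    rw [Polynomial.aeval_monomial, Polynomial.derivative_monomial, Polynomial.aeval_monomial]
    rcases Nat.eq_zero_or_pos m with rfl | hm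
    · simp
    · rw [Derivation.leibniz, Derivation.leibniz_pow]
      have : d⁄dX ℚ ((algebraMap ℚ (PowerSeries ℚ)) a) = 0 := by
        simp [PowerSeries.algebraMap_apply]
      rw [this, smul_zero, add_zero]
      push_cast
      rw [smul_eq_mul, smul_eq_mul]
      ring

lemma derivative_psComp (hg : constantCoeff g = 0) (f : PowerSeries ℚ) :
    d⁄dX ℚ (psComp f g) = psComp (d⁄dX ℚ f) g * d⁄dX ℚ g := by
  ext n
  rw [coeff_derivative, coeff_psComp_eq hg f (Nat.lt_succ_self (n+1)), ← coeff_derivative,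
    derivative_aeval, ← trunc_derivative]
  rw [PowerSeries.coeff_mul, PowerSeries.coeff_mul]
  refine Finset.sum_congr rfl fun p hp => ?_
  rw [Finset.HasAntidiagonal.mem_antidiagonal] at hp
  rw [coeff_psComp_eq hg _ (by omega : p.1 < n + 1)]

lemma eq_expMul {F : PowerSeries ℚ} (x : ℚ)
    (hd : d⁄dX ℚ F = C x * F) (h0 : constantCoeff F = 1) :
    F = expMul x := by
  ext n
  induction n with
  | zero =>
    rw [PowerSeries.coeff_zero_eq_constantCoeff_apply, h0, expMul, coeff_mk]
    norm_num
  | succ n ih =>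
    have h := congrArg (coeff n) hd
    rw [coeff_derivative, PowerSeries.coeff_C_mul, ih] at h
    rw [expMul, coeff_mk] at *
    have hfac : ((n+1).factorial : ℚ) ≠ 0 := Nat.cast_ne_zero.2 (Nat.factorial_ne_zero _)
    have hfac' : ((n).factorial : ℚ) ≠ 0 := Nat.cast_ne_zero.2 (Nat.factorial_ne_zero _)
    have hn1 : ((n:ℚ) + 1) ≠ 0 := by positivity
    have : coeff (n+1) F = x * (x ^ n / n.factorial) / ((n:ℚ)+1) := by
      field_simp at h ⊢
      linarith [h]
    rw [this, Nat.factorial_succ]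
    push_cast
    field_simp
    ring

lemma derivative_exp : d⁄dX ℚ (exp ℚ) = exp ℚ := by
  ext n
  rw [coeff_derivative, PowerSeries.coeff_exp, PowerSeries.coeff_exp]
  simp only [Algebra.algebraMap_self, RingHom.id_apply, map_div₀, map_one]
  rw [Nat.factorial_succ]
  have h1 : ((n+1).factorial : ℚ) ≠ 0 := Nat.cast_ne_zero.2 (Nat.factorial_ne_zero _)
  have h2 : ((n).factorial : ℚ) ≠ 0 := Nat.cast_ne_zero.2 (Nat.factorial_ne_zero _)
  push_cast
  field_simp

lemma derivative_logOneAdd : d⁄dX ℚ logOneAdd = PowerSeries.mk fun n => (-1 : ℚ) ^ n := by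
  ext n
  rw [coeff_derivative, logOneAdd, coeff_mk, coeff_mk]
  have hn : (n + 1 : ℕ) ≠ 0 := Nat.succ_ne_zero n
  rw [if_neg hn]
  have : ((-1 : ℚ)) ^ (n + 1 + 1) = (-1) ^ n := by
    rw [pow_succ, pow_succ]; ring
  rw [this]
  have hn1 : ((n : ℚ) + 1) ≠ 0 := by positivity
  push_cast
  field_simp

lemma constantCoeff_logOneAdd : constantCoeff logOneAdd = 0 := by
  rw [← PowerSeries.coeff_zero_eq_constantCoeff_apply, logOneAdd, coeff_mk]
  simp

lemma one_add_X_mul_dlog : (1 + X) * d⁄dX ℚ logOneAdd = 1 := by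
  rw [derivative_logOneAdd]
  ext n
  rw [add_mul, one_mul, map_add]
  cases n with
  | zero => simp
  | succ n =>
    rw [coeff_mk, PowerSeries.coeff_succ_X_mul, coeff_mk, PowerSeries.coeff_one]
    simp [pow_succ]

lemma hg_exp : constantCoeff (exp ℚ - 1) = 0 := by
  rw [map_sub, constantCoeff_exp, map_one, sub_self]

lemma derivative_exp_sub_one : d⁄dX ℚ (exp ℚ - 1) = exp ℚ := by
  rw [map_sub, derivative_exp]
  simp

lemma psComp_log_exp : psComp logOneAdd (exp ℚ - 1) = X := by
  apply derivative.ext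
  · rw [derivative_psComp hg_exp, derivative_exp_sub_one, derivative_X]
    have h1 : psComp ((1 + X) * d⁄dX ℚ logOneAdd) (exp ℚ - 1) = 1 := by
      rw [one_add_X_mul_dlog, psComp_one]
    rw [psComp_mul hg_exp, psComp_add, psComp_one, psComp_X hg_exp] at h1
    have he : (1 : PowerSeries ℚ) + (exp ℚ - 1) = exp ℚ := by ring
    rw [he] at h1
    rw [mul_comm]; exact h1
  · rw [constantCoeff_psComp, constantCoeff_X, PowerSeries.coeff_zero_eq_constantCoeff_apply,
      constantCoeff_logOneAdd]

lemma onePlusPow_ode (x : ℚ) :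
    (1 + X) * d⁄dX ℚ (onePlusPow x) = C x * onePlusPow x := by
  have hh : constantCoeff (x • logOneAdd) = 0 := by
    rw [← PowerSeries.coeff_zero_eq_constantCoeff_apply, map_smul,
      PowerSeries.coeff_zero_eq_constantCoeff_apply, constantCoeff_logOneAdd, smul_zero]
  rw [onePlusPow, derivative_psComp hh, derivative_exp]
  have hd : d⁄dX ℚ (x • logOneAdd) = PowerSeries.C x * d⁄dX ℚ logOneAdd := by
    rw [show d⁄dX ℚ (x • logOneAdd) = x • d⁄dX ℚ logOneAdd from
      PowerSeries.derivativeFun_smul x logOneAdd, PowerSeries.smul_eq_C_mul]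
  rw [hd]
  calc (1 + X) * (psComp (exp ℚ) (x • logOneAdd) * (C x * d⁄dX ℚ logOneAdd))
      = C x * psComp (exp ℚ) (x • logOneAdd) * ((1 + X) * d⁄dX ℚ logOneAdd) := by ring
    _ = C x * psComp (exp ℚ) (x • logOneAdd) := by rw [one_add_X_mul_dlog, mul_one]

lemma psComp_onePlusPow (x : ℚ) :
    psComp (onePlusPow x) (exp ℚ - 1) = expMul x := by
  apply eq_expMul x
  · rw [derivative_psComp hg_exp, derivative_exp_sub_one]
    have h1 : psComp ((1 + X) * d⁄dX ℚ (onePlusPow x)) (exp ℚ - 1)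
        = psComp (C x * onePlusPow x) (exp ℚ - 1) := by rw [onePlusPow_ode x]
    rw [psComp_mul hg_exp, psComp_mul hg_exp, psComp_add, psComp_one, psComp_X hg_exp,
      psComp_C] at h1
    have he : (1 : PowerSeries ℚ) + (exp ℚ - 1) = exp ℚ := by ring
    rw [he] at h1
    rw [mul_comm]; exact h1
  · rw [constantCoeff_psComp, onePlusPow]
    have : coeff 0 (psComp (exp ℚ) (x • logOneAdd)) = coeff 0 (exp ℚ) := by
      rw [PowerSeries.coeff_zero_eq_constantCoeff_apply, constantCoeff_psComp]
    rw [this, PowerSeries.coeff_zero_eq_constantCoeff_apply, constantCoeff_exp]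

lemma expMul_zero : expMul (0 : ℚ) = 1 := by
  ext n
  rw [expMul, coeff_mk, PowerSeries.coeff_one]
  cases n with
  | zero => norm_num
  | succ n => simp

lemma exp_sub_one_ne_zero : exp ℚ - 1 ≠ 0 := by
  intro h
  have := congrArg (coeff 1) h
  rw [map_sub, PowerSeries.coeff_exp, PowerSeries.coeff_one, map_zero] at this
  norm_num at this

lemma exp_add_one_ne_zero : exp ℚ + 1 ≠ 0 := by
  intro h
  have := congrArg (constantCoeff) h
  rw [map_add, constantCoeff_exp, map_one, map_zero] at this
  norm_num at this

end PSC

open PSC in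
theorem DC_stirling2_sum_eq_bernoulli_euler_sum
    (r s : ℕ) (hr : 1 ≤ r) (hs : 1 ≤ s) (n : ℕ) (x : ℚ)
    (DC B E : ℕ → ℚ) (S2 : ℕ → ℕ → ℚ)
    (hDC : logOneAdd ^ r * (2 : PowerSeries ℚ) ^ s * onePlusPow x =
      PowerSeries.X ^ r * (PowerSeries.X + 2) ^ s * (PowerSeries.mk fun k => DC k / (k.factorial : ℚ)))
    (hB : (PowerSeries.X : PowerSeries ℚ) ^ r * expMul x =
      (PowerSeries.exp ℚ - 1) ^ r * (PowerSeries.mk fun k => B k / (k.factorial : ℚ)))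
    (hE : (2 : PowerSeries ℚ) ^ s * expMul (0 : ℚ) =
      (PowerSeries.exp ℚ + 1) ^ s * (PowerSeries.mk fun k => E k / (k.factorial : ℚ)))
    (hS2 : ∀ m, (PowerSeries.exp ℚ - 1) ^ m =
      (m.factorial : ℚ) • (PowerSeries.mk fun k => S2 k m / (k.factorial : ℚ))) :
    ∑ m ∈ Finset.range (n + 1), DC m * S2 n m =
      ∑ l ∈ Finset.range (n + 1), (n.choose l : ℚ) * B l * E (n - l) := by
  set mkDC : PowerSeries ℚ := PowerSeries.mk fun k => DC k / (k.factorial : ℚ) with hmkDC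
  set mkB : PowerSeries ℚ := PowerSeries.mk fun k => B k / (k.factorial : ℚ) with hmkB
  set mkE : PowerSeries ℚ := PowerSeries.mk fun k => E k / (k.factorial : ℚ) with hmkE
  -- Step D : substitute t = e^t - 1 into hDC
  have hD := congrArg (compHom hg_exp) hDC
  simp only [map_mul, map_pow, map_add, map_ofNat, compHom_apply] at hD
  rw [psComp_log_exp, psComp_X hg_exp, psComp_onePlusPow] at hD
  have he2 : (PowerSeries.exp ℚ - 1) + 2 = PowerSeries.exp ℚ + 1 := by ring
  rw [he2] at hD
  -- hD : X^r * 2^s * expMul x = (exp-1)^r * (exp+1)^s * psComp mkDC (exp-1)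
  -- Step E : combine with hB, hE
  have hE1 : (2 : PowerSeries ℚ) ^ s = (PowerSeries.exp ℚ + 1) ^ s * mkE := by
    rw [← hE, expMul_zero, mul_one]
  have comb : (PowerSeries.exp ℚ - 1) ^ r * (PowerSeries.exp ℚ + 1) ^ s * (mkB * mkE) =
      (PowerSeries.exp ℚ - 1) ^ r * (PowerSeries.exp ℚ + 1) ^ s *
        psComp mkDC (PowerSeries.exp ℚ - 1) := by
    calc (PowerSeries.exp ℚ - 1) ^ r * (PowerSeries.exp ℚ + 1) ^ s * (mkB * mkE)
        = ((PowerSeries.exp ℚ - 1) ^ r * mkB) * ((PowerSeries.exp ℚ + 1) ^ s * mkE) := by ring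
      _ = (PowerSeries.X ^ r * expMul x) * (2 : PowerSeries ℚ) ^ s := by rw [← hB, ← hE1]
      _ = PowerSeries.X ^ r * (2 : PowerSeries ℚ) ^ s * expMul x := by ring
      _ = (PowerSeries.exp ℚ - 1) ^ r * (PowerSeries.exp ℚ + 1) ^ s *
            psComp mkDC (PowerSeries.exp ℚ - 1) := by rw [hD]
  have hne : (PowerSeries.exp ℚ - 1) ^ r * (PowerSeries.exp ℚ + 1) ^ s ≠ 0 :=
    mul_ne_zero (pow_ne_zero _ exp_sub_one_ne_zero) (pow_ne_zero _ exp_add_one_ne_zero)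
  have hkey : psComp mkDC (PowerSeries.exp ℚ - 1) = mkB * mkE :=
    (mul_left_cancel₀ hne comb).symm
  -- Step F : extract coefficient n
  have hcoeff := congrArg (PowerSeries.coeff n) hkey
  rw [psComp, PowerSeries.coeff_mk, PowerSeries.coeff_mul,
    Finset.Nat.sum_antidiagonal_eq_sum_range_succ_mk] at hcoeff
  have hnfac : ((n.factorial : ℚ)) ≠ 0 := Nat.cast_ne_zero.2 (Nat.factorial_ne_zero _)
  have hL : ∀ m ∈ Finset.range (n + 1),
      PowerSeries.coeff m mkDC * PowerSeries.coeff n ((PowerSeries.exp ℚ - 1) ^ m) =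
        DC m * S2 n m / (n.factorial : ℚ) := by
    intro m _
    have hmfac : ((m.factorial : ℚ)) ≠ 0 := Nat.cast_ne_zero.2 (Nat.factorial_ne_zero _)
    rw [hmkDC, PowerSeries.coeff_mk, hS2 m, map_smul, PowerSeries.coeff_mk, smul_eq_mul]
    field_simp
  rw [Finset.sum_congr rfl hL] at hcoeff
  have hR : ∀ l ∈ Finset.range (n + 1),
      PowerSeries.coeff l mkB * PowerSeries.coeff (n - l) mkE =
        B l / (l.factorial : ℚ) * (E (n - l) / ((n - l).factorial : ℚ)) := by
    intro l _
    rw [hmkB, hmkE, PowerSeries.coeff_mk, PowerSeries.coeff_mk]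
  rw [Finset.sum_congr rfl hR] at hcoeff
  calc ∑ m ∈ Finset.range (n + 1), DC m * S2 n m
      = (n.factorial : ℚ) * ∑ m ∈ Finset.range (n + 1), DC m * S2 n m / (n.factorial : ℚ) := by
        rw [Finset.mul_sum]
        refine Finset.sum_congr rfl fun m _ => ?_
        field_simp
    _ = (n.factorial : ℚ) * ∑ l ∈ Finset.range (n + 1),
          B l / (l.factorial : ℚ) * (E (n - l) / ((n - l).factorial : ℚ)) := by rw [hcoeff]
    _ = ∑ l ∈ Finset.range (n + 1), (n.choose l : ℚ) * B l * E (n - l) := by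
        rw [Finset.mul_sum]
        refine Finset.sum_congr rfl fun l hl => ?_
        have hln : l ≤ n := by rw [Finset.mem_range] at hl; omega
        have h1 : ((l.factorial : ℚ)) ≠ 0 := Nat.cast_ne_zero.2 (Nat.factorial_ne_zero _)
        have h2 : (((n - l).factorial : ℚ)) ≠ 0 := Nat.cast_ne_zero.2 (Nat.factorial_ne_zero _)
        rw [Nat.cast_choose ℚ hln]
        field_simp
end
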